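/- Assume λ₁ < λ₂ < … < λ_d and λ > λ₁/2. Then there exists ᾱ > 0 such that for every step size α ∈ (0, ᾱ), the set of initial points q⁰ ∈ ℝᵈ for which the gradient descent sequence q^{k+1} = q^k − α∇ℓ(q^k) converges to a critical point of ℓ other than √(1 − λ₁/(2λ)) e₁ or −√(1 − λ₁/(2λ)) e₁ has Lebesgue measure zero. In other words, for a randomly initialized q⁰ (drawn from any probability distribution absolutely continuous with respect to Lebesgue measure), with probability one gradient descent avoids the bad critical points of ℓ, i.e. the strict saddle points and local maxima. -/

import Mathlib

open Filter Topology MeasureTheory Set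

section nullsets

private lemma lemA {f : ℝ → ℝ} (hf : AnalyticOnNhd ℝ f univ) {a : ℝ} (ha : f a ≠ 0) :
    volume {x : ℝ | f x = 0} = 0 := by
  set Z := {x : ℝ | f x = 0} with hZ
  have hiso : ∀ z ∈ Z, ∀ᶠ w in 𝓝[≠] z, f w ≠ 0 := by
    intro z hz
    rcases (hf z (mem_univ z)).eventually_eq_zero_or_eventually_ne_zero with h | h
    · exfalso
      exact ha (hf.eqOn_zero_of_preconnected_of_eventuallyEq_zero isPreconnected_univ
        (mem_univ z) h (mem_univ a))
    · exact h
  have hdisc : DiscreteTopology Z := by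
    rw [discreteTopology_subtype_iff]
    intro z hz
    have h1 : {w | f w ≠ 0} ∈ 𝓝[≠] z := hiso z hz
    rw [← empty_mem_iff_bot]
    have : {w | f w ≠ 0} ∩ Z = ∅ := by
      ext w; simp only [mem_inter_iff, mem_empty_iff_false, iff_false]
      rintro ⟨hw1, hw2⟩; exact hw1 hw2
    exact this ▸ inter_mem (mem_inf_of_left h1) (mem_inf_of_right (mem_principal_self Z))
  have hcount : Z.Countable := by
    have : IsLindelof Z :=
      (HereditarilyLindelofSpace.isHereditarilyLindelof_univ).isLindelof_subset (subset_univ Z)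
    exact this.countable hdisc
  exact hcount.measure_zero _

private noncomputable def consCLM (n : ℕ) : (ℝ × (Fin n → ℝ)) →L[ℝ] (Fin (n+1) → ℝ) :=
  LinearMap.toContinuousLinearMap
    { toFun := fun p => Fin.cons p.1 p.2
      map_add' := by
        intro p q
        funext j
        cases j using Fin.cases <;> simp
      map_smul' := by
        intro c p
        funext j
        cases j using Fin.cases <;> simp }

private lemma lemB : ∀ (n : ℕ) (f : (Fin n → ℝ) → ℝ), AnalyticOnNhd ℝ f univ →
    ∀ a : Fin n → ℝ, f a ≠ 0 → volume {x : Fin n → ℝ | f x = 0} = 0 := by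
  intro n
  induction n with
  | zero =>
    intro f hf a ha
    have : {x : Fin 0 → ℝ | f x = 0} = ∅ := by
      ext x
      simp only [mem_setOf_eq, mem_empty_iff_false, iff_false]
      rw [Subsingleton.elim x a]
      exact ha
    rw [this, measure_empty]
  | succ n IH =>
    intro f hf a ha
    have hfc : Continuous f := by
      rw [← continuousOn_univ]; exact hf.continuousOn
    have hZm : MeasurableSet {x : Fin (n+1) → ℝ | f x = 0} :=
      (isClosed_eq hfc continuous_const).measurableSet
    set e := (MeasurableEquiv.piFinSuccAbove (fun _ : Fin (n+1) => ℝ) 0) with he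
    have hmp : MeasurePreserving e.symm
        ((volume : Measure ℝ).prod (volume : Measure (Fin n → ℝ))) volume := by
      have := (measurePreserving_piFinSuccAbove (fun _ : Fin (n+1) => (volume : Measure ℝ)) 0).symm
      simpa only [volume_pi] using this
    set g : ℝ × (Fin n → ℝ) → ℝ := fun p => f (Fin.cons p.1 p.2) with hg
    have hsymm : ∀ p : ℝ × (Fin n → ℝ), e.symm p = Fin.cons p.1 p.2 := by
      intro p
      simp [he, MeasurableEquiv.piFinSuccAbove_symm_apply, Fin.insertNthEquiv,
        Fin.insertNth_zero']
    have hpre : e.symm ⁻¹' {x : Fin (n+1) → ℝ | f x = 0} = {p | g p = 0} := by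
      ext p; simp [hsymm p, hg]
    have key : volume {x : Fin (n+1) → ℝ | f x = 0}
        = ((volume : Measure ℝ).prod (volume : Measure (Fin n → ℝ))) {p | g p = 0} := by
      rw [← hmp.measure_preimage hZm.nullMeasurableSet, hpre]
    rw [key]
    have hga : AnalyticOnNhd ℝ g univ := by
      intro p _
      exact (hf _ (mem_univ _)).comp ((consCLM n).analyticAt p)
    have hgc : Continuous g := by
      rw [← continuousOn_univ]; exact hga.continuousOn
    have hgm : MeasurableSet {p : ℝ × (Fin n → ℝ) | g p = 0} :=
      (isClosed_eq hgc continuous_const).measurableSet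
    rw [Measure.measure_prod_null hgm]
    have hganz : g (a 0, Fin.tail a) ≠ 0 := by
      simpa [hg, Fin.cons_self_tail] using ha
    have hA : volume {t : ℝ | g (t, Fin.tail a) = 0} = 0 := by
      apply lemA (f := fun t => g (t, Fin.tail a)) (a := a 0) _ hganz
      intro t _
      exact (hga _ (mem_univ _)).comp ((analyticAt_id).prod analyticAt_const)
    have hae : ∀ᵐ t : ℝ, t ∉ {t : ℝ | g (t, Fin.tail a) = 0} :=
      measure_eq_zero_iff_ae_notMem.mp hA
    filter_upwards [hae] with t ht
    have : volume {y : Fin n → ℝ | g (t, y) = 0} = 0 := by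
      apply IH (fun y => g (t, y)) _ (Fin.tail a) ht
      intro y _
      exact (hga _ (mem_univ _)).comp (analyticAt_const.prod (analyticAt_id))
    simpa using this

private lemma lemC {d : ℕ} {f : EuclideanSpace ℝ (Fin d) → ℝ}
    (hf : AnalyticOnNhd ℝ f univ) {a : EuclideanSpace ℝ (Fin d)} (ha : f a ≠ 0) :
    volume {x : EuclideanSpace ℝ (Fin d) | f x = 0} = 0 := by
  have hfc : Continuous f := by
    rw [← continuousOn_univ]; exact hf.continuousOn
  have hZm : MeasurableSet {x : EuclideanSpace ℝ (Fin d) | f x = 0} :=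
    (isClosed_eq hfc continuous_const).measurableSet
  have hmp : MeasurePreserving (MeasurableEquiv.toLp 2 (Fin d → ℝ)) volume volume :=
    (EuclideanSpace.volume_preserving_symm_measurableEquiv_toLp (Fin d)).symm
  rw [← hmp.measure_preimage hZm.nullMeasurableSet]
  set L := (PiLp.continuousLinearEquiv 2 ℝ (fun _ : Fin d => ℝ)).symm with hL
  have hcoe : ∀ y : Fin d → ℝ, (MeasurableEquiv.toLp 2 (Fin d → ℝ)) y = L y := by
    intro y
    rfl
  have hset : (MeasurableEquiv.toLp 2 (Fin d → ℝ)) ⁻¹'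
      {x : EuclideanSpace ℝ (Fin d) | f x = 0} = {y : Fin d → ℝ | f (L y) = 0} := by
    ext y; exact Iff.rfl
  rw [hset]
  apply lemB d (fun y => f (L y)) _ (PiLp.continuousLinearEquiv 2 ℝ (fun _ : Fin d => ℝ) a)
  · simpa [hL] using ha
  · intro y _
    exact (hf _ (mem_univ _)).comp ((L : (Fin d → ℝ) →L[ℝ] EuclideanSpace ℝ (Fin d)).analyticAt y)

end nullsets

section grad
variable {d : ℕ} (Λ : Fin d → ℝ) (lam α : ℝ)

local notation "E" => EuclideanSpace ℝ (Fin d)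

private lemma norm_sq_eq (q : E) : ‖q‖ ^ 2 = ∑ i, q i ^ 2 := by
  rw [EuclideanSpace.norm_eq, Real.sq_sqrt (by positivity)]
  congr 1; funext i; rw [Real.norm_eq_abs, sq_abs]

private noncomputable def TT : E →L[ℝ] E :=
  LinearMap.toContinuousLinearMap
    { toFun := fun q => (WithLp.equiv 2 (Fin d → ℝ)).symm (fun i => Λ i * q i)
      map_add' := by
        intro p q; ext i
        simp only [WithLp.equiv_symm_apply, PiLp.toLp_apply, PiLp.add_apply]
        ring
      map_smul' := by
        intro c p; ext i
        simp only [WithLp.equiv_symm_apply, PiLp.toLp_apply, PiLp.smul_apply, smul_eq_mul, RingHom.id_apply]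
        ring }

private lemma TT_apply (q : E) (i : Fin d) : TT Λ q i = Λ i * q i := rfl

private noncomputable def Gmap (q : E) : E := (2 : ℝ) • TT Λ q + (4 * lam * (‖q‖ ^ 2 - 1)) • q

private lemma Gmap_apply (q : E) (i : Fin d) :
    Gmap Λ lam q i = (2 * Λ i + 4 * lam * (‖q‖ ^ 2 - 1)) * q i := by
  simp only [Gmap, PiLp.add_apply, PiLp.smul_apply, TT_apply, smul_eq_mul]
  ring

private lemma hasGradientAt_ell (ℓ : E → ℝ)
    (hℓ : ∀ q : E, ℓ q = ∑ i, Λ i * q i ^ 2 + lam * (‖q‖ ^ 2 - 1) ^ 2)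
    (q : E) : HasGradientAt ℓ (Gmap Λ lam q) q := by
  have hℓ' : ℓ = fun q : E => (∑ i, Λ i * (q i * q i)) +
      lam * (((∑ i, q i * q i) - 1) * ((∑ i, q i * q i) - 1)) := by
    funext x
    rw [hℓ x, norm_sq_eq]
    simp only [← pow_two]
    try ring
  set P : Fin d → (E →L[ℝ] ℝ) := fun i => EuclideanSpace.proj i with hP
  have hcoe : ∀ i : Fin d, (fun q : E => q i) = ⇑(P i) := by
    intro i; funext q; simp [hP]
  have hproj : ∀ i : Fin d, HasFDerivAt (fun q : E => q i) (P i) q := by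
    intro i; rw [hcoe i]; exact (P i).hasFDerivAt
  have hsq : ∀ i : Fin d, HasFDerivAt (fun q : E => q i * q i)
      (q i • P i + q i • P i) q :=
    fun i => (hproj i).mul (hproj i)
  have h1 : HasFDerivAt (fun q : E => ∑ i, Λ i * (q i * q i))
      (∑ i ∈ Finset.univ, Λ i • (q i • P i + q i • P i)) q :=
    HasFDerivAt.fun_sum fun i _ => (hsq i).const_mul (Λ i)
  have hS : HasFDerivAt (fun q : E => (∑ i, q i * q i) - 1)
      (∑ i ∈ Finset.univ, (q i • P i + q i • P i)) q :=
    (HasFDerivAt.fun_sum fun i _ => hsq i).sub_const 1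
  have h2 := (hS.mul hS).const_mul lam
  have hD := h1.add h2
  rw [hasGradientAt_iff_hasFDerivAt]
  rw [hℓ']
  convert hD using 1
  case e'_8 => rfl
  case e'_9 => rfl
  · rfl
  apply ContinuousLinearMap.ext
  intro v
  have hinner : (InnerProductSpace.toDual ℝ E (Gmap Λ lam q)) v
      = ∑ i, Gmap Λ lam q i * v i := by
    rw [InnerProductSpace.toDual_apply_apply, PiLp.inner_apply]
    simp [RCLike.inner_apply, mul_comm]
  rw [hinner]
  simp only [ContinuousLinearMap.add_apply, ContinuousLinearMap.coe_sum',
    Finset.sum_apply, ContinuousLinearMap.coe_smul', Pi.smul_apply,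
    ContinuousLinearMap.smul_apply, hP, smul_eq_mul,
    Gmap_apply, norm_sq_eq, PiLp.proj_apply]
  simp only [← pow_two]
  simp only [mul_add, Finset.mul_sum]
  conv_rhs => rw [← Finset.sum_add_distrib, ← Finset.sum_add_distrib]
  refine Finset.sum_congr rfl fun i _ => ?_
  ring

private noncomputable def Fmap (q : E) : E := q - α • Gmap Λ lam q

private lemma Fmap_apply (q : E) (i : Fin d) :
    Fmap Λ lam α q i = (1 - α * (2 * Λ i + 4 * lam * (‖q‖ ^ 2 - 1))) * q i := by
  simp only [Fmap, PiLp.sub_apply, PiLp.smul_apply, Gmap_apply, smul_eq_mul]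
  ring

private lemma Gmap_zero : Gmap Λ lam (0 : E) = 0 := by
  simp [Gmap]

private lemma Fmap_zero : Fmap Λ lam α (0 : E) = 0 := by
  simp [Fmap, Gmap_zero]

private lemma analytic_normSq : AnalyticOnNhd ℝ (fun q : E => ‖q‖ ^ 2) univ := by
  have : (fun q : E => ‖q‖ ^ 2) = fun q : E => ∑ i, q i ^ 2 := by
    funext q; exact norm_sq_eq q
  rw [this]
  intro q _
  apply Finset.analyticAt_fun_sum
  intro i _
  have : (fun q : E => q i ^ 2)
      = fun q : E => ((EuclideanSpace.proj i : E →L[ℝ] ℝ) q) ^ 2 := by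
    funext q; simp
  rw [this]
  exact ((EuclideanSpace.proj i : E →L[ℝ] ℝ).analyticAt q).pow 2

private lemma analytic_Gmap : AnalyticOnNhd ℝ (Gmap Λ lam) univ := by
  intro q _
  apply AnalyticAt.add
  · have : (fun q : E => (2:ℝ) • TT Λ q) = ⇑((2:ℝ) • TT Λ) := by
      funext q; simp
    rw [this]
    exact ((2:ℝ) • TT Λ).analyticAt q
  · exact (analyticAt_const.mul ((analytic_normSq q (mem_univ q)).sub
      analyticAt_const)).smul analyticAt_id

private lemma analytic_Fmap : AnalyticOnNhd ℝ (Fmap Λ lam α) univ := by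
  intro q _
  exact (analyticAt_id).sub (analyticAt_const.fun_smul (analytic_Gmap Λ lam q (mem_univ q)))

private lemma analytic_Fmap_iter (j : ℕ) :
    AnalyticOnNhd ℝ (fun q : E => (Fmap Λ lam α)^[j] q) univ := by
  induction j with
  | zero => exact fun q _ => analyticAt_id
  | succ j IH =>
    intro q hq
    have : (fun q : E => (Fmap Λ lam α)^[j+1] q)
        = fun q : E => Fmap Λ lam α ((Fmap Λ lam α)^[j] q) := by
      funext q; rw [Function.iterate_succ_apply']
    rw [this]
    exact (analytic_Fmap Λ lam α _ (mem_univ _)).comp (IH q hq)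

end grad

set_option maxHeartbeats 1000000

/-- If `λ₁ < λ₂ < … < λ_d` and `λ > λ₁/2`, there is `ᾱ > 0` such that for
every step size `α ∈ (0, ᾱ)`, the set of initial points from which gradient descent
`q^{k+1} = q^k − α∇ℓ(q^k)` converges to a critical point of `ℓ` other than
`±√(1 − λ₁/(2λ)) e₁` (the strict saddle points / local maxima) has Lebesgue measure zero;
equivalently, under any absolutely continuous random initialization, with probability one
gradient descent avoids the bad critical points of `ℓ`. -/
theorem stmt18 (d : ℕ) (hd : 0 < d) (Λ : Fin d → ℝ) (hΛ0 : 0 ≤ Λ ⟨0, hd⟩)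
    (hΛ : StrictMono Λ) (lam : ℝ) (hlam : 0 < lam)
    (ℓ : EuclideanSpace ℝ (Fin d) → ℝ)
    (hℓ : ∀ q : EuclideanSpace ℝ (Fin d),
      ℓ q = ∑ i, Λ i * q i ^ 2 + lam * (‖q‖ ^ 2 - 1) ^ 2)
    (hlam1 : Λ ⟨0, hd⟩ / 2 < lam) :
    ∃ αbar : ℝ, 0 < αbar ∧ ∀ α : ℝ, 0 < α → α < αbar →
      volume {q0 : EuclideanSpace ℝ (Fin d) |
        ∃ seq : ℕ → EuclideanSpace ℝ (Fin d),
          seq 0 = q0 ∧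
          (∀ k : ℕ, seq (k + 1) = seq k - α • gradient ℓ (seq k)) ∧
          ∃ p : EuclideanSpace ℝ (Fin d),
            gradient ℓ p = 0 ∧
            p ≠ Real.sqrt (1 - Λ ⟨0, hd⟩ / (2 * lam)) •
                  EuclideanSpace.single (⟨0, hd⟩ : Fin d) (1 : ℝ) ∧
            p ≠ -(Real.sqrt (1 - Λ ⟨0, hd⟩ / (2 * lam)) •
                  EuclideanSpace.single (⟨0, hd⟩ : Fin d) (1 : ℝ)) ∧
            Tendsto seq atTop (𝓝 p)} = 0 := by
  refine ⟨1, one_pos, ?_⟩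
  intro α hα hα1
  set i0 : Fin d := ⟨0, hd⟩ with hi0
  have hgradeq : ∀ x, gradient ℓ x = Gmap Λ lam x :=
    fun x => (hasGradientAt_ell Λ lam ℓ hℓ x).gradient
  have hΛ2 : Λ i0 < 2 * lam := by linarith
  set g : EuclideanSpace ℝ (Fin d) → ℝ :=
    fun q => 1 - α * (2 * Λ i0 + 4 * lam * (‖q‖ ^ 2 - 1)) with hgdef
  -- the covering sets
  have hsub : {q0 : EuclideanSpace ℝ (Fin d) |
      ∃ seq : ℕ → EuclideanSpace ℝ (Fin d),
        seq 0 = q0 ∧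
        (∀ k : ℕ, seq (k + 1) = seq k - α • gradient ℓ (seq k)) ∧
        ∃ p : EuclideanSpace ℝ (Fin d),
          gradient ℓ p = 0 ∧
          p ≠ Real.sqrt (1 - Λ ⟨0, hd⟩ / (2 * lam)) •
                EuclideanSpace.single (⟨0, hd⟩ : Fin d) (1 : ℝ) ∧
          p ≠ -(Real.sqrt (1 - Λ ⟨0, hd⟩ / (2 * lam)) •
                EuclideanSpace.single (⟨0, hd⟩ : Fin d) (1 : ℝ)) ∧
          Tendsto seq atTop (𝓝 p)}
      ⊆ {q : EuclideanSpace ℝ (Fin d) | q i0 = 0}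
        ∪ ⋃ j : ℕ, {q : EuclideanSpace ℝ (Fin d) | g ((Fmap Λ lam α)^[j] q) = 0} := by
    rintro q0 ⟨seq, hseq0, hrec, p, hcrit, hp1, hp2, htend⟩
    -- seq is iteration of Fmap
    have hstep : ∀ k, seq (k + 1) = Fmap Λ lam α (seq k) := by
      intro k
      rw [hrec k, hgradeq]
      rfl
    -- coordinate recursion
    have hu : ∀ k, seq (k + 1) i0 = g (seq k) * seq k i0 := by
      intro k
      rw [hstep k, Fmap_apply]
    -- classify the limit point
    have hGp : Gmap Λ lam p = 0 := by rw [← hgradeq p]; exact hcrit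
    have hco : ∀ i, (2 * Λ i + 4 * lam * (‖p‖ ^ 2 - 1)) * p i = 0 := by
      intro i
      have := congrArg (fun v : EuclideanSpace ℝ (Fin d) => v i) hGp
      simpa [Gmap_apply] using this
    have hclass : p i0 = 0 ∧ 2 * Λ i0 + 4 * lam * (‖p‖ ^ 2 - 1) < 0 := by
      by_cases h0 : p i0 = 0
      · refine ⟨h0, ?_⟩
        by_cases hz : ∀ i, p i = 0
        · have hp0 : p = 0 := by
            ext i
            exact hz i
          rw [hp0]
          simp only [norm_zero]
          nlinarith
        · push_neg at hz
          obtain ⟨i, hi⟩ := hz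
          have hine : i ≠ i0 := by
            intro h; rw [h] at hi; exact hi h0
          have hii : (2 * Λ i + 4 * lam * (‖p‖ ^ 2 - 1)) = 0 := by
            rcases mul_eq_zero.mp (hco i) with h | h
            · exact h
            · exact absurd h hi
          have hlt : Λ i0 < Λ i := by
            apply hΛ
            rw [hi0, Fin.lt_def]
            exact Nat.pos_of_ne_zero (fun h => hine (Fin.ext (h ▸ rfl)))
          linarith
      · exfalso
        have hc0 : 2 * Λ i0 + 4 * lam * (‖p‖ ^ 2 - 1) = 0 := by
          rcases mul_eq_zero.mp (hco i0) with h | h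
          · exact h
          · exact absurd h h0
        have hothers : ∀ i, i ≠ i0 → p i = 0 := by
          intro i hine
          have hlt : Λ i0 < Λ i := by
            apply hΛ
            rw [hi0, Fin.lt_def]
            exact Nat.pos_of_ne_zero (fun h => hine (Fin.ext (h ▸ rfl)))
          rcases mul_eq_zero.mp (hco i) with h | h
          · exfalso; nlinarith
          · exact h
        have hnorm : ‖p‖ ^ 2 = p i0 ^ 2 := by
          rw [norm_sq_eq]
          apply Finset.sum_eq_single i0
          · intro b _ hb
            rw [hothers b hb]
            ring
          · intro h
            exact absurd (Finset.mem_univ i0) h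
        set r : ℝ := 1 - Λ ⟨0, hd⟩ / (2 * lam) with hr
        have hrpos : 0 < r := by
          rw [hr]
          have : Λ ⟨0, hd⟩ / (2 * lam) < 1 := by
            rw [div_lt_one (by linarith)]
            exact hΛ2
          linarith
        have hsq : p i0 ^ 2 = r := by
          rw [hnorm] at hc0
          rw [hr]
          field_simp
          nlinarith
        have hprod : (p i0 - Real.sqrt r) * (p i0 + Real.sqrt r) = 0 := by
          have hs := Real.sq_sqrt hrpos.le
          nlinarith
        have hrepr : p = (p i0) • EuclideanSpace.single i0 (1 : ℝ) := by
          ext i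
          by_cases hie : i = i0
          · subst hie
            simp [EuclideanSpace.single_apply]
          · rw [hothers i hie]
            simp [EuclideanSpace.single_apply, hie]
        rcases mul_eq_zero.mp hprod with h | h
        · apply hp1
          rw [hrepr, sub_eq_zero.mp h]
        · apply hp2
          rw [hrepr, eq_neg_of_add_eq_zero_left h]
          rw [neg_smul]
    -- limit of coordinate
    have htendu : Tendsto (fun k => seq k i0) atTop (𝓝 (p i0)) := by
      have hcont := ((EuclideanSpace.proj i0 :
        EuclideanSpace ℝ (Fin d) →L[ℝ] ℝ).continuous.tendsto p).comp htend
      simpa [Function.comp_def] using hcont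
    rw [hclass.1] at htendu
    -- g (seq k) tends to g p > 1
    have hgp : 1 < g p := by
      show 1 < 1 - α * (2 * Λ i0 + 4 * lam * (‖p‖ ^ 2 - 1))
      nlinarith [mul_pos hα (neg_pos.mpr hclass.2)]
    have hgcont : Continuous g := by
      rw [hgdef]
      fun_prop
    have hgt : Tendsto (fun k => g (seq k)) atTop (𝓝 (g p)) :=
      (hgcont.tendsto p).comp htend
    have hev : ∀ᶠ k in atTop, 1 ≤ g (seq k) :=
      hgt.eventually (eventually_ge_nhds hgp)
    obtain ⟨K, hK⟩ := eventually_atTop.mp hev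
    -- |seq K i0| ≤ |seq k i0| for k ≥ K
    have hmono : ∀ k, K ≤ k → |seq K i0| ≤ |seq k i0| := by
      intro k hk
      induction k, hk using Nat.le_induction with
      | base => exact le_refl _
      | succ k hk IH =>
        rw [hu k, abs_mul]
        calc |seq K i0| ≤ |seq k i0| := IH
        _ = 1 * |seq k i0| := (one_mul _).symm
        _ ≤ |g (seq k)| * |seq k i0| := by
            apply mul_le_mul_of_nonneg_right _ (abs_nonneg _)
            exact le_trans (hK k hk) (le_abs_self _)
    have habs : Tendsto (fun k => |seq k i0|) atTop (𝓝 0) := by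
      have := htendu.abs
      simpa using this
    have hK0 : |seq K i0| ≤ 0 := by
      apply ge_of_tendsto habs
      rw [eventually_atTop]
      exact ⟨K, hmono⟩
    have huK : seq K i0 = 0 := abs_eq_zero.mp (le_antisymm hK0 (abs_nonneg _))
    -- backwards induction
    have hback : ∀ k, seq k i0 = 0 → q0 i0 = 0 ∨ ∃ j, g (seq j) = 0 := by
      intro k
      induction k with
      | zero => intro h; left; rw [← hseq0]; exact h
      | succ k IH =>
        intro h
        rw [hu k] at h
        rcases mul_eq_zero.mp h with h | h
        · right; exact ⟨k, h⟩
        · exact IH h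
    have hiter : ∀ k, seq k = (Fmap Λ lam α)^[k] q0 := by
      intro k
      induction k with
      | zero => simpa using hseq0
      | succ k IH => rw [Function.iterate_succ_apply', ← IH, hstep k]
    rcases hback K huK with h | ⟨j, hj⟩
    · left; exact h
    · right
      refine mem_iUnion.mpr ⟨j, ?_⟩
      rw [mem_setOf_eq, ← hiter j]
      exact hj
  -- measure bound
  refine le_antisymm ?_ zero_le
  refine le_trans (measure_mono hsub) ?_
  rw [le_zero_iff]
  apply measure_union_null
  · apply lemC (f := fun q : EuclideanSpace ℝ (Fin d) => q i0)
      (a := EuclideanSpace.single i0 (1 : ℝ))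
    · intro q _
      have : (fun q : EuclideanSpace ℝ (Fin d) => q i0)
          = ⇑(EuclideanSpace.proj i0 : EuclideanSpace ℝ (Fin d) →L[ℝ] ℝ) := by
        funext q; simp
      rw [this]
      exact (EuclideanSpace.proj i0 : EuclideanSpace ℝ (Fin d) →L[ℝ] ℝ).analyticAt q
    · simp [EuclideanSpace.single_apply]
  · apply measure_iUnion_null
    intro j
    apply lemC (f := fun q => g ((Fmap Λ lam α)^[j] q)) (a := 0)
    · intro q hq
      have hgan : AnalyticOnNhd ℝ g univ := by
        rw [hgdef]
        intro x _
        exact analyticAt_const.sub (analyticAt_const.mul (analyticAt_const.add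
          (analyticAt_const.mul ((analytic_normSq x (mem_univ x)).sub analyticAt_const))))
      exact (hgan _ (mem_univ _)).comp (analytic_Fmap_iter Λ lam α j q hq)
    · have hit0 : (Fmap Λ lam α)^[j] (0 : EuclideanSpace ℝ (Fin d)) = 0 := by
        induction j with
        | zero => rfl
        | succ j IH => rw [Function.iterate_succ_apply', IH, Fmap_zero]
      rw [hit0, hgdef]
      simp only [norm_zero]
      nlinarith
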